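/- Let n, k be positive integers with k even, and let Z ∈ {0,1}^{n×k} be a matrix each of whose rows sums to 1. Define X := Z·Zᵀ − (1/k)·J, where J is the n×n all-ones matrix, and x := 2·∑_{a=1}^{k/2} Z(·,a) − 𝟙 ∈ {−1,+1}ⁿ. Let w ∈ ℝⁿ satisfy 0 ≤ w_i ≤ 1 for all i, ∑_i w_i ≤ 0.004·n, and ⟨Z(·,a), w⟩ ≤ 0.004·n/k for every a ∈ {1,…,k/2}. Then for every a ∈ {1,…,k/2}: −(0.004·n/k)·⟨w, Z(·,a)⟩ ≤ ⟨X·(x ⊙ w), x ⊙ w ⊙ Z(·,a)⟩ ≤ (0.008·n/k)·⟨w, Z(·,a)⟩. -/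

import Mathlib

set_option autoImplicit false

open Matrix

/-- Let `Z ∈ {0,1}^{n×k}` with rows summing to 1 (`k` even),
`X := ZZᵀ − (1/k)J`, `x := 2∑_{a<k/2} Z(·,a) − 𝟙 ∈ {±1}ⁿ`. If `0 ≤ w ≤ 1`,
`∑ᵢ wᵢ ≤ 0.004n`, and `⟨Z(·,a), w⟩ ≤ 0.004n/k` for every `a < k/2`, then for every
`a < k/2`:
`−(0.004n/k)⟨w, Z(·,a)⟩ ≤ ⟨X(x ⊙ w), x ⊙ w ⊙ Z(·,a)⟩ ≤ (0.008n/k)⟨w, Z(·,a)⟩`. -/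
theorem stmt_19 (n k : ℕ) (hn : 0 < n) (hk : 0 < k) (hkeven : Even k)
    (Z : Fin n → Fin k → ℝ)
    (hZ01 : ∀ i a, Z i a = 0 ∨ Z i a = 1)
    (hrow : ∀ i, ∑ a, Z i a = 1)
    (X : Matrix (Fin n) (Fin n) ℝ)
    (hX : ∀ i j, X i j = (∑ a, Z i a * Z j a) - 1 / k)
    (x : Fin n → ℝ)
    (hx : ∀ i, x i =
      2 * (∑ a ∈ Finset.univ.filter (fun a : Fin k => (a : ℕ) < k / 2), Z i a) - 1)
    (w : Fin n → ℝ)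
    (hw01 : ∀ i, 0 ≤ w i ∧ w i ≤ 1)
    (hwsum : ∑ i, w i ≤ 0.004 * n)
    (hwZ : ∀ a : Fin k, (a : ℕ) < k / 2 → ∑ i, Z i a * w i ≤ 0.004 * n / k)
    (a : Fin k) (ha : (a : ℕ) < k / 2) :
    -(0.004 * n / k) * (∑ i, w i * Z i a) ≤
        X.mulVec (fun i => x i * w i) ⬝ᵥ (fun i => x i * w i * Z i a) ∧
      X.mulVec (fun i => x i * w i) ⬝ᵥ (fun i => x i * w i * Z i a) ≤
        (0.008 * n / k) * (∑ i, w i * Z i a) := by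
  have hknn : (0:ℝ) < k := by exact_mod_cast hk
  have hZnn : ∀ i b, 0 ≤ Z i b := by
    intro i b; rcases hZ01 i b with h | h <;> rw [h] <;> norm_num
  have hZsq : ∀ i, Z i a * Z i a = Z i a := by
    intro i; rcases hZ01 i a with h | h <;> rw [h] <;> ring
  -- columns have disjoint supports
  have hdisj : ∀ i b, b ≠ a → Z i b * Z i a = 0 := by
    intro i b hb
    rcases hZ01 i b with h | h
    · rw [h, zero_mul]
    rcases hZ01 i a with h' | h'
    · rw [h', mul_zero]
    exfalso
    have h1 : Z i b + ∑ c ∈ Finset.univ.erase b, Z i c = ∑ c, Z i c :=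
      Finset.add_sum_erase _ _ (Finset.mem_univ b)
    have h2 : Z i a ≤ ∑ c ∈ Finset.univ.erase b, Z i c := by
      refine Finset.single_le_sum (fun c _ => hZnn i c) ?_
      exact Finset.mem_erase.mpr ⟨fun hc => hb hc.symm, Finset.mem_univ a⟩
    rw [hrow i] at h1
    rw [h, h'] at *
    linarith
  -- x = 1 on the support of column a
  have hxZ : ∀ i, x i * Z i a = Z i a := by
    intro i
    rcases hZ01 i a with h | h
    · rw [h, mul_zero]
    have hsum : ∑ b ∈ Finset.univ.filter (fun b : Fin k => (b : ℕ) < k / 2), Z i b = 1 := by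
      rw [Finset.sum_eq_single a]
      · exact h
      · intro b _ hba
        have h0 := hdisj i b hba
        rw [h, mul_one] at h0
        exact h0
      · intro hna
        exact absurd (Finset.mem_filter.mpr ⟨Finset.mem_univ a, ha⟩) hna
    have hx1 : x i = 1 := by rw [hx i, hsum]; ring
    rw [hx1, one_mul]
  have hXcollapse : ∀ i j, X i j * Z i a = (Z j a - 1 / k) * Z i a := by
    intro i j
    rw [hX]
    have hc : (∑ b, Z i b * Z j b) * Z i a = Z j a * Z i a := by
      rw [Finset.sum_mul, Finset.sum_eq_single a]
      · calc Z i a * Z j a * Z i a = Z j a * (Z i a * Z i a) := by ring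
          _ = Z j a * Z i a := by rw [hZsq]
      · intro b _ hb
        calc Z i b * Z j b * Z i a = Z j b * (Z i b * Z i a) := by ring
          _ = 0 := by rw [hdisj i b hb, mul_zero]
      · intro hna; exact absurd (Finset.mem_univ a) hna
    rw [sub_mul, hc]; ring
  set S : ℝ := ∑ i, w i * Z i a with hS
  set T : ℝ := ∑ j, x j * w j with hT
  set W : ℝ := ∑ i, w i with hW
  -- key identity
  have key : X.mulVec (fun i => x i * w i) ⬝ᵥ (fun i => x i * w i * Z i a)
      = (S - 1 / k * T) * S := by
    have hstep : X.mulVec (fun i => x i * w i) ⬝ᵥ (fun i => x i * w i * Z i a)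
        = ∑ i, ∑ j, (Z j a - 1 / k) * (x j * w j) * (w i * Z i a) := by
      simp only [Matrix.mulVec, dotProduct]
      refine Finset.sum_congr rfl (fun i _ => ?_)
      rw [Finset.sum_mul]
      refine Finset.sum_congr rfl (fun j _ => ?_)
      calc X i j * (x j * w j) * (x i * w i * Z i a)
          = X i j * (x j * w j) * (x i * w i * (Z i a * Z i a)) := by rw [hZsq]
        _ = (X i j * Z i a) * (x j * w j) * ((x i * Z i a) * w i) := by ring
        _ = ((Z j a - 1 / k) * Z i a) * (x j * w j) * (Z i a * w i) := by
            rw [hXcollapse, hxZ]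
        _ = (Z j a - 1 / k) * (x j * w j) * (w i * (Z i a * Z i a)) := by ring
        _ = (Z j a - 1 / k) * (x j * w j) * (w i * Z i a) := by rw [hZsq]
    rw [hstep]
    rw [Finset.sum_comm]
    have h2 : ∀ j, ∑ i, (Z j a - 1 / k) * (x j * w j) * (w i * Z i a)
        = (Z j a - 1 / k) * (x j * w j) * S := by
      intro j; rw [← Finset.mul_sum]
    rw [Finset.sum_congr rfl (fun j _ => h2 j)]
    have h3 : ∑ j, (Z j a - 1 / k) * (x j * w j) * S
        = (∑ j, (Z j a - 1 / k) * (x j * w j)) * S := by rw [Finset.sum_mul]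
    rw [h3]
    congr 1
    have h4 : ∀ j, (Z j a - 1 / k) * (x j * w j) = w j * Z j a - 1 / k * (x j * w j) := by
      intro j
      have : (Z j a - 1 / k) * (x j * w j) = (x j * Z j a) * w j - 1 / k * (x j * w j) := by ring
      rw [this, hxZ]; ring
    rw [Finset.sum_congr rfl (fun j _ => h4 j), Finset.sum_sub_distrib, ← Finset.mul_sum]
  -- bounds on S, T
  have hSnn : 0 ≤ S := Finset.sum_nonneg fun i _ => mul_nonneg (hw01 i).1 (hZnn i a)
  have hSub : S ≤ 0.004 * n / k := by
    have := hwZ a ha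
    have he : S = ∑ i, Z i a * w i := Finset.sum_congr rfl fun i _ => mul_comm _ _
    rw [he]; exact this
  have hxabs : ∀ i, -1 ≤ x i ∧ x i ≤ 1 := by
    intro i
    have hnn : 0 ≤ ∑ b ∈ Finset.univ.filter (fun b : Fin k => (b : ℕ) < k / 2), Z i b :=
      Finset.sum_nonneg fun b _ => hZnn i b
    have hle : (∑ b ∈ Finset.univ.filter (fun b : Fin k => (b : ℕ) < k / 2), Z i b)
        ≤ ∑ b, Z i b :=
      Finset.sum_le_sum_of_subset_of_nonneg (Finset.filter_subset _ _)
        (fun b _ _ => hZnn i b)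
    rw [hrow i] at hle
    constructor <;> rw [hx i] <;> linarith
  have hTub : T ≤ W := by
    refine Finset.sum_le_sum fun j _ => ?_
    have := (hxabs j).2
    nlinarith [(hw01 j).1]
  have hTlb : -W ≤ T := by
    have : ∑ j, -(w j) ≤ T := by
      refine Finset.sum_le_sum fun j _ => ?_
      have := (hxabs j).1
      nlinarith [(hw01 j).1]
    simpa [Finset.sum_neg_distrib] using this
  have hWub : W ≤ 0.004 * n := hwsum
  have hpos : (0:ℝ) ≤ 1 / (k:ℝ) := by positivity
  have hTle : 1 / (k:ℝ) * T ≤ 0.004 * n / k := by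
    have h := mul_le_mul_of_nonneg_left (hTub.trans hWub) hpos
    have e : 1 / (k:ℝ) * (0.004 * n) = 0.004 * n / k := by ring
    linarith
  have hTge : -(0.004 * (n:ℝ) / k) ≤ 1 / (k:ℝ) * T := by
    have h := mul_le_mul_of_nonneg_left (show -(0.004 * (n:ℝ)) ≤ T by linarith) hpos
    have e : 1 / (k:ℝ) * (-(0.004 * n)) = -(0.004 * n / k) := by ring
    linarith
  rw [key]
  constructor
  · nlinarith [mul_nonneg (show (0:ℝ) ≤ S - 1 / k * T + 0.004 * n / k by linarith) hSnn]
  · have e8 : (0.008:ℝ) * n / k = 0.004 * n / k + 0.004 * n / k := by ring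
    have h6 : S - 1 / (k:ℝ) * T ≤ 0.008 * n / k := by linarith
    calc (S - 1 / (k:ℝ) * T) * S ≤ (0.008 * n / k) * S :=
      mul_le_mul_of_nonneg_right h6 hSnn
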